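/- Suppose a configuration satisfies Tree Initially and no MixSwap is applicable at any tuple. Then for all colors i, j ∈ ℛ with i ≠ j and all distinct nodes u, v ∈ V_i ∩ V_j that are both (i,j)-mixed (i.e. d_i(u) ≥ 1, d_j(u) ≥ 1, d_i(v) ≥ 1, d_j(v) ≥ 1), either (L_i(u) < L_i(v) and L_j(u) < L_j(v)) or (L_i(v) < L_i(u) and L_j(v) < L_j(u)). -/

import Mathlib

namespace P2P

/-- A walk of length `n` from `r` to `u` in the edge set `E`. -/
def Walk {α : Type*} (E : Finset (α × α)) (r u : α) (n : ℕ) : Prop :=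
  ∃ f : ℕ → α, f 0 = r ∧ f n = u ∧ ∀ k < n, (f k, f (k + 1)) ∈ E

/-- Depth of `u` below root `r`: minimal number of edges of a directed walk
(equivalently, of a directed path) from `r` to `u`; `⊤` if unreachable. -/
noncomputable def depth {α : Type*} (E : Finset (α × α)) (r u : α) : ℕ∞ :=
  sInf {n : ℕ∞ | ∃ m : ℕ, n = (m : ℕ∞) ∧ Walk E r u m}

/-- Out-degree of `u` in `E`. -/
def outDeg {α : Type*} [DecidableEq α] (E : Finset (α × α)) (u : α) : ℕ :=
  (E.filter fun e => e.1 = u).card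

/-- In-degree of `u` in `E`. -/
def inDeg {α : Type*} [DecidableEq α] (E : Finset (α × α)) (u : α) : ℕ :=
  (E.filter fun e => e.2 = u).card

/-- A configuration assigns to each color an edge set. -/
abbrev Cfg := ℕ → Finset (ℕ × ℕ)

/-- The node set `V = {1, …, N}`. -/
def V (N : ℕ) : Finset ℕ := Finset.Icc 1 N

/-- The root set `ℛ = {1, …, M}`. -/
def R (M : ℕ) : Finset ℕ := Finset.Icc 1 M

/-- `u` has an incoming `i`-edge (root `i` counts its server link). -/
def HasIn (E : Cfg) (i u : ℕ) : Prop := (∃ w, (w, u) ∈ E i) ∨ u = i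

/-- Incoming count of `u`: incoming edges of all colors, plus 1 if `u` is a root. -/
def incCount (M : ℕ) (E : Cfg) (u : ℕ) : ℕ :=
  (∑ i ∈ R M, inDeg (E i) u) + (if u ∈ R M then 1 else 0)

/-- Total out-degree `d(u)`. -/
def dtot (M : ℕ) (E : Cfg) (u : ℕ) : ℕ := ∑ i ∈ R M, outDeg (E i) u

/-- Edges are ordered pairs of distinct nodes of `V`. -/
def ValidEdges (N M : ℕ) (E : Cfg) : Prop :=
  ∀ i ∈ R M, ∀ e ∈ E i, e.1 ∈ V N ∧ e.2 ∈ V N ∧ e.1 ≠ e.2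

/-- Assumption (Tree Initially). -/
def TreeInit (N M K : ℕ) (E : Cfg) : Prop :=
  (∀ u ∈ V N, incCount M E u ≤ K) ∧
  (∀ i ∈ R M, ∀ u ∈ V N, inDeg (E i) u ≤ 1) ∧
  (∀ i ∈ R M, inDeg (E i) i = 0)

/-- A node is available if it has spare capacity and some incoming edge. -/
def Available (M : ℕ) (E : Cfg) (dbar : ℕ → ℕ) (v : ℕ) : Prop :=
  dtot M E v < dbar v ∧ ∃ i ∈ R M, HasIn E i v

/-- An Add is applicable at `(u_p, u, i)`. -/
def AddApp (N M K : ℕ) (E : Cfg) (dbar : ℕ → ℕ) (up u i : ℕ) : Prop :=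
  i ∈ R M ∧ up ∈ V N ∧ u ∈ V N ∧
  incCount M E u < K ∧ ¬ HasIn E i u ∧ HasIn E i up ∧ dtot M E up < dbar up

/-- An Insert is applicable at `(u_p, u, i)` with `i`-child `u_c` of `u_p`. -/
def InsertApp (N M K : ℕ) (E : Cfg) (up u uc i : ℕ) : Prop :=
  i ∈ R M ∧ up ∈ V N ∧ u ∈ V N ∧
  incCount M E u < K ∧ ¬ HasIn E i u ∧ HasIn E i up ∧ (up, uc) ∈ E i

/-- A Jump is applicable at `(u, v, i)`. -/
def JumpApp (M : ℕ) (E : Cfg) (dbar : ℕ → ℕ) (u v i : ℕ) : Prop :=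
  i ∈ R M ∧ (∃ up, (up, u) ∈ E i) ∧ Available M E dbar v ∧ HasIn E i v ∧
  depth (E i) i v + 1 < depth (E i) i u

/-- A LeafSwap is applicable at `(u, v, i)`. -/
def LeafSwapApp (M : ℕ) (E : Cfg) (u v i : ℕ) : Prop :=
  i ∈ R M ∧ (∃ up, (up, u) ∈ E i) ∧ (∃ vp, (vp, v) ∈ E i) ∧
  outDeg (E i) v = 0 ∧ 0 < outDeg (E i) u ∧
  depth (E i) i v < depth (E i) i u

/-- A MixSwap is applicable at `(u, u_c, v, v_c, i, j)`. -/
def MixSwapApp (M : ℕ) (E : Cfg) (u uc v vc i j : ℕ) : Prop :=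
  i ∈ R M ∧ j ∈ R M ∧ i ≠ j ∧ u ≠ v ∧
  (u, uc) ∈ E i ∧ (v, vc) ∈ E j ∧ uc ≠ v ∧ vc ≠ u ∧
  depth (E i) i v ≤ depth (E i) i u ∧ depth (E j) j u ≤ depth (E j) j v ∧
  ((depth (E i) i u, depth (E j) j u) ≠ (depth (E i) i v, depth (E j) j v) ∨
    ((u : ℤ) - (v : ℤ)) * ((j : ℤ) - (i : ℤ)) > 0)

/-- Result of performing an Add. -/
def doAdd (E : Cfg) (up u i : ℕ) : Cfg :=
  fun l => if l = i then insert (up, u) (E l) else E l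

/-- Result of performing an Insert. -/
def doInsert (E : Cfg) (up u uc i : ℕ) : Cfg :=
  fun l => if l = i then insert (up, u) (insert (u, uc) ((E l).erase (up, uc))) else E l

/-- Result of performing a Jump (parent `u_p` is replaced by `v`). -/
def doJump (E : Cfg) (up u v i : ℕ) : Cfg :=
  fun l => if l = i then insert (v, u) ((E l).erase (up, u)) else E l

/-- Result of performing a LeafSwap (`u` and `v` exchange parents). -/
def doLeafSwap (E : Cfg) (up u vp v i : ℕ) : Cfg :=
  fun l => if l = i then
    insert (up, v) (insert (vp, u) (((E l).erase (up, u)).erase (vp, v))) else E l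

/-- Result of performing a MixSwap (`u` and `v` exchange the children `u_c`, `v_c`). -/
def doMixSwap (E : Cfg) (u uc v vc i j : ℕ) : Cfg :=
  fun l => if l = i then insert (v, uc) ((E l).erase (u, uc))
    else if l = j then insert (u, vc) ((E l).erase (v, vc)) else E l

/-- One step of the algorithm: perform any applicable Add, Insert, Jump,
LeafSwap or MixSwap. -/
def Step (N M K : ℕ) (dbar : ℕ → ℕ) (E E' : Cfg) : Prop :=
  (∃ up u i, AddApp N M K E dbar up u i ∧ E' = doAdd E up u i) ∨
  (∃ up u uc i, InsertApp N M K E up u uc i ∧ E' = doInsert E up u uc i) ∨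
  (∃ up u v i, (up, u) ∈ E i ∧ JumpApp M E dbar u v i ∧ E' = doJump E up u v i) ∨
  (∃ up u vp v i, (up, u) ∈ E i ∧ (vp, v) ∈ E i ∧ LeafSwapApp M E u v i ∧
      E' = doLeafSwap E up u vp v i) ∨
  (∃ u uc v vc i j, MixSwapApp M E u uc v vc i j ∧ E' = doMixSwap E u uc v vc i j)

/-- Total number of edges `|E|`. -/
def numE (M : ℕ) (E : Cfg) : ℕ := ∑ i ∈ R M, (E i).card

/-- `Y = Σ_u Σ_i min(L_i(u), N)`. -/
noncomputable def Yval (N M : ℕ) (E : Cfg) : ℕ :=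
  ∑ u ∈ V N, ∑ i ∈ R M, (min (depth (E i) i u) (N : ℕ∞)).toNat

/-- `S = Σ_u u · Σ_i i · d_i(u)`. -/
def Sval (N M : ℕ) (E : Cfg) : ℕ :=
  ∑ u ∈ V N, u * ∑ i ∈ R M, i * outDeg (E i) u


/-- If `u` is reachable, the depth is attained by a walk. -/
lemma depth_exists {α : Type*} (E : Finset (α × α)) (r u : α)
    (h : depth E r u ≠ ⊤) : ∃ m : ℕ, depth E r u = (m : ℕ∞) ∧ Walk E r u m := by
  have hne : {n : ℕ∞ | ∃ m : ℕ, n = (m : ℕ∞) ∧ Walk E r u m}.Nonempty := by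
    by_contra h'
    rw [Set.not_nonempty_iff_eq_empty] at h'
    exact h (by rw [depth, h', sInf_empty])
  have hmem := csInf_mem hne
  obtain ⟨m, hm, hw⟩ := hmem
  exact ⟨m, hm, hw⟩

lemma depth_le_of_walk {α : Type*} (E : Finset (α × α)) (r u : α) {m : ℕ}
    (h : Walk E r u m) : depth E r u ≤ (m : ℕ∞) :=
  sInf_le ⟨m, rfl, h⟩

/-- If `v`'s unique incoming edge is `(u, v)` and `v` is reachable with the root
having no incoming edge, then `depth u + 1 ≤ depth v`. -/
lemma child_depth {E : Finset (ℕ × ℕ)} {r u v : ℕ}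
    (huv : (u, v) ∈ E) (huniq : ∀ w, (w, v) ∈ E → w = u)
    (hroot : inDeg E r = 0) (hfv : depth E r v ≠ ⊤) :
    depth E r u + 1 ≤ depth E r v := by
  obtain ⟨m, hm, f, hf0, hfm, hfe⟩ := depth_exists E r v hfv
  have hm0 : m ≠ 0 := by
    rintro rfl
    have hvr : v = r := by rw [← hfm, hf0]
    have hmem : (u, v) ∈ E.filter (fun e => e.2 = r) :=
      Finset.mem_filter.mpr ⟨huv, by simp [hvr]⟩
    rw [inDeg, Finset.card_eq_zero] at hroot
    simp [hroot] at hmem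
  obtain ⟨m', rfl⟩ := Nat.exists_eq_succ_of_ne_zero hm0
  have hlast : (f m', v) ∈ E := by
    have := hfe m' (Nat.lt_succ_self m')
    rwa [hfm] at this
  have hfu : f m' = u := huniq _ hlast
  have hw : Walk E r u m' := ⟨f, hf0, hfu, fun k hk => hfe k (by omega)⟩
  have h1 : depth E r u ≤ (m' : ℕ∞) := depth_le_of_walk E r u hw
  calc depth E r u + 1 ≤ (m' : ℕ∞) + 1 := add_le_add_left h1 1
    _ = ((m' + 1 : ℕ) : ℕ∞) := by push_cast; ring
    _ = depth E r v := hm.symm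

lemma enat_absurd {a b : ℕ∞} (hfa : a ≠ ⊤) (h1 : a + 1 ≤ b) (h2 : b ≤ a) : False := by
  lift a to ℕ using hfa
  have h3 : (a : ℕ∞) + 1 ≤ (a : ℕ∞) := le_trans h1 h2
  norm_cast at h3
  omega

/-- Core step: given the ordering hypotheses and the tiebreak condition,
an applicable MixSwap is produced, contradiction. -/
lemma mkswap {N M K : ℕ} {E : Cfg} (htree : TreeInit N M K E)
    (hnomix : ∀ u uc v vc i j : ℕ, ¬ MixSwapApp M E u uc v vc i j)
    {i j u v : ℕ} (hi : i ∈ R M) (hj : j ∈ R M) (hij : i ≠ j) (huv : u ≠ v)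
    (hu : u ∈ V N) (hv : v ∈ V N)
    (hfu : depth (E i) i u ≠ ⊤) (hfv : depth (E j) j v ≠ ⊤)
    (hdu : 1 ≤ outDeg (E i) u) (hdv : 1 ≤ outDeg (E j) v)
    (hile : depth (E i) i v ≤ depth (E i) i u)
    (hjle : depth (E j) j u ≤ depth (E j) j v)
    (htb : (depth (E i) i u, depth (E j) j u) ≠ (depth (E i) i v, depth (E j) j v) ∨
      ((u : ℤ) - (v : ℤ)) * ((j : ℤ) - (i : ℤ)) > 0) : False := by
  obtain ⟨e, he⟩ := Finset.card_pos.mp hdu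
  obtain ⟨heE, heu⟩ := Finset.mem_filter.mp he
  have hucE : (u, e.2) ∈ E i := by rw [← heu]; simpa using heE
  obtain ⟨e', he'⟩ := Finset.card_pos.mp hdv
  obtain ⟨he'E, he'v⟩ := Finset.mem_filter.mp he'
  have hvcE : (v, e'.2) ∈ E j := by rw [← he'v]; simpa using he'E
  set uc := e.2
  set vc := e'.2
  -- uc ≠ v
  have huc : uc ≠ v := by
    rintro rfl
    have huniq : ∀ w, (w, uc) ∈ E i → w = u := by
      intro w hw
      have hle := htree.2.1 i hi uc hv
      have h1 : (w, uc) ∈ (E i).filter (fun e => e.2 = uc) :=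
        Finset.mem_filter.mpr ⟨hw, rfl⟩
      have h2 : (u, uc) ∈ (E i).filter (fun e => e.2 = uc) :=
        Finset.mem_filter.mpr ⟨hucE, rfl⟩
      have := Finset.card_le_one.mp hle _ h1 _ h2
      exact congrArg Prod.fst this
    have := child_depth hucE huniq (htree.2.2 i hi)
      (fun h => hfu (top_le_iff.mp (h ▸ hile)))
    exact enat_absurd hfu this hile
  -- vc ≠ u
  have hvc : vc ≠ u := by
    rintro rfl
    have huniq : ∀ w, (w, vc) ∈ E j → w = v := by
      intro w hw
      have hle := htree.2.1 j hj vc hu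
      have h1 : (w, vc) ∈ (E j).filter (fun e => e.2 = vc) :=
        Finset.mem_filter.mpr ⟨hw, rfl⟩
      have h2 : (v, vc) ∈ (E j).filter (fun e => e.2 = vc) :=
        Finset.mem_filter.mpr ⟨hvcE, rfl⟩
      have := Finset.card_le_one.mp hle _ h1 _ h2
      exact congrArg Prod.fst this
    have := child_depth hvcE huniq (htree.2.2 j hj)
      (fun h => hfv (top_le_iff.mp (h ▸ hjle)))
    exact enat_absurd hfv this hjle
  exact hnomix u uc v vc i j ⟨hi, hj, hij, huv, hucE, hvcE, huc, hvc, hile, hjle, htb⟩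


/-- if no MixSwap is applicable anywhere, then the depth vectors of
any two distinct `(i,j)`-mixed nodes of `V_i ∩ V_j` are strictly ordered. -/
theorem mixed_nodes_chain
    (N M K : ℕ) (hK : 0 < K) (hKM : K ≤ M) (hMN : M ≤ N)
    (E : Cfg)
    (hvalid : ValidEdges N M E) (htree : TreeInit N M K E)
    (hnomix : ∀ u uc v vc i j : ℕ, ¬ MixSwapApp M E u uc v vc i j) :
    ∀ i ∈ R M, ∀ j ∈ R M, i ≠ j →
      ∀ u ∈ V N, ∀ v ∈ V N, u ≠ v →
      depth (E i) i u ≠ ⊤ → depth (E j) j u ≠ ⊤ →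
      depth (E i) i v ≠ ⊤ → depth (E j) j v ≠ ⊤ →
      1 ≤ outDeg (E i) u → 1 ≤ outDeg (E j) u →
      1 ≤ outDeg (E i) v → 1 ≤ outDeg (E j) v →
      (depth (E i) i u < depth (E i) i v ∧ depth (E j) j u < depth (E j) j v) ∨
      (depth (E i) i v < depth (E i) i u ∧ depth (E j) j v < depth (E j) j u) := by
  intro i hi j hj hij u hu v hv huv hfiu hfju hfiv hfjv hdiu hdju hdiv hdjv
  by_contra hcon
  push_neg at hcon
  obtain ⟨h1, h2⟩ := hcon
  rcases lt_trichotomy (depth (E i) i u) (depth (E i) i v) with h | h | h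
  · exact mkswap htree hnomix hi hj hij huv.symm hv hu hfiv hfju hdiv hdju h.le (h1 h)
      (Or.inl (fun hp => absurd (congrArg Prod.fst hp) (by simpa using h.ne')))
  · rcases lt_trichotomy (depth (E j) j u) (depth (E j) j v) with h' | h' | h'
    · exact mkswap htree hnomix hi hj hij huv hu hv hfiu hfjv hdiu hdjv h.ge h'.le
        (Or.inl (fun hp => absurd (congrArg Prod.snd hp) (by simpa using h'.ne)))
    · rcases lt_trichotomy ((u:ℤ) - (v:ℤ)) 0 with hz | hz | hz
      · rcases lt_trichotomy ((j:ℤ) - (i:ℤ)) 0 with hz' | hz' | hz'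
        · exact mkswap htree hnomix hi hj hij huv hu hv hfiu hfjv hdiu hdjv h.ge h'.le
            (Or.inr (by nlinarith))
        · exact absurd (by omega : (i:ℤ) = j) (by exact_mod_cast hij)
        · exact mkswap htree hnomix hi hj hij huv.symm hv hu hfiv hfju hdiv hdju h.le h'.ge
            (Or.inr (by nlinarith))
      · exact absurd (by omega : (u:ℤ) = v) (by exact_mod_cast huv)
      · rcases lt_trichotomy ((j:ℤ) - (i:ℤ)) 0 with hz' | hz' | hz'
        · exact mkswap htree hnomix hi hj hij huv.symm hv hu hfiv hfju hdiv hdju h.le h'.ge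
            (Or.inr (by nlinarith))
        · exact absurd (by omega : (i:ℤ) = j) (by exact_mod_cast hij)
        · exact mkswap htree hnomix hi hj hij huv hu hv hfiu hfjv hdiu hdjv h.ge h'.le
            (Or.inr (by nlinarith))
    · exact mkswap htree hnomix hi hj hij huv.symm hv hu hfiv hfju hdiv hdju h.le h'.le
        (Or.inl (fun hp => absurd (congrArg Prod.snd hp) (by simpa using h'.ne)))
  · exact mkswap htree hnomix hi hj hij huv hu hv hfiu hfjv hdiu hdjv h.le (h2 h)
      (Or.inl (fun hp => absurd (congrArg Prod.fst hp) (by simpa using h.ne')))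

end P2P
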